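/- The merge operator on local types is commutative: for all local types T1 and T2, T1 ⊔ T2 is defined if and only if T2 ⊔ T1 is defined, and when both are defined they are equal. -/
import Mathlib


/-- Local types T ::= end | base B | p?{lᵢ⟨Uᵢ⟩.Tᵢ} | p!{lᵢ⟨Uᵢ⟩.Tᵢ} | ∀α.T | ∃α.T | @_ω T | ↓α.T.
Payload types U (base types or local types) are embedded into local types via `base`.
Branchings/selections are represented as functions from labels to optional
(payload, continuation) pairs, which makes the pairwise-distinctness of labels implicit. -/
inductive LocalTy where
  | endT : LocalTy
  | base : String → LocalTy
  | recv : String → (String → Option (LocalTy × LocalTy)) → LocalTy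
  | send : String → (String → Option (LocalTy × LocalTy)) → LocalTy
  | all  : String → LocalTy → LocalTy
  | ex   : String → LocalTy → LocalTy
  | att  : String → LocalTy → LocalTy
  | here : String → LocalTy → LocalTy

mutual
/-- The partial merge operator: `Merge T1 T2 T` means T1 ⊔ T2 is defined and equals T.
B ⊔ B = B for base types; T ⊔ T = T for end, selection, @, ∀, ∃ types; branching types
from the same participant merge by taking the union of branches, recursively merging
payloads and continuations on common labels; undefined otherwise. -/
inductive Merge : LocalTy → LocalTy → LocalTy → Prop where
  | endT : Merge .endT .endT .endT
  | base (b : String) : Merge (.base b) (.base b) (.base b)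
  | send (p : String) (f : String → Option (LocalTy × LocalTy)) :
      Merge (.send p f) (.send p f) (.send p f)
  | all (a : String) (T : LocalTy) : Merge (.all a T) (.all a T) (.all a T)
  | ex (a : String) (T : LocalTy) : Merge (.ex a T) (.ex a T) (.ex a T)
  | att (w : String) (T : LocalTy) : Merge (.att w T) (.att w T) (.att w T)
  | recv (p : String) (f g h : String → Option (LocalTy × LocalTy)) :
      (∀ l, MergeO (f l) (g l) (h l)) → Merge (.recv p f) (.recv p g) (.recv p h)

/-- Merge of optional branches: a label present on only one side is kept as is;
a common label merges payloads and continuations. -/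
inductive MergeO : Option (LocalTy × LocalTy) → Option (LocalTy × LocalTy) →
    Option (LocalTy × LocalTy) → Prop where
  | none : MergeO none none none
  | left (b : LocalTy × LocalTy) : MergeO (some b) none (some b)
  | right (b : LocalTy × LocalTy) : MergeO none (some b) (some b)
  | both {U1 T1 U2 T2 U T : LocalTy} :
      Merge U1 U2 U → Merge T1 T2 T →
      MergeO (some (U1, T1)) (some (U2, T2)) (some (U, T))
end


theorem merge_symm {a b c : LocalTy} (hm : Merge a b c) : Merge b a c :=
  Merge.rec
    (motive_1 := fun a b c _ => Merge b a c)
    (motive_2 := fun a b c _ => MergeO b a c)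
    Merge.endT Merge.base Merge.send Merge.all Merge.ex Merge.att
    (fun p f g h _ ih => Merge.recv p g f h ih)
    MergeO.none MergeO.right MergeO.left
    (fun _ _ ihU ihT => MergeO.both ihU ihT)
    hm

theorem merge_det {a b c c' : LocalTy} (hm : Merge a b c) (hm' : Merge a b c') : c = c' :=
  Merge.rec
    (motive_1 := fun a b c _ => ∀ c', Merge a b c' → c = c')
    (motive_2 := fun a b c _ => ∀ c', MergeO a b c' → c = c')
    (fun _ h => by cases h; rfl)
    (fun _ _ h => by cases h; rfl)
    (fun _ _ _ h => by cases h; rfl)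
    (fun _ _ _ h => by cases h; rfl)
    (fun _ _ _ h => by cases h; rfl)
    (fun _ _ _ h => by cases h; rfl)
    (fun p f g hh _ ih c' hc => by
      cases hc with
      | recv _ _ _ h' hmo =>
        congr 1
        funext l
        exact ih l _ (hmo l))
    (fun _ h => by cases h; rfl)
    (fun _ _ h => by cases h; rfl)
    (fun _ _ h => by cases h; rfl)
    (fun _ _ ihU ihT c' hc => by
      cases hc with
      | both hU hT => rw [ihU _ hU, ihT _ hT])
    hm c' hm'

/-- the merge operator is commutative: T1 ⊔ T2 is defined iff
T2 ⊔ T1 is defined, and when both are defined they are equal. -/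
theorem merge_comm (T1 T2 : LocalTy) :
    (∀ T, Merge T1 T2 T ↔ Merge T2 T1 T) ∧
    (∀ T T', Merge T1 T2 T → Merge T2 T1 T' → T = T') := by
  exact ⟨fun T => ⟨merge_symm, merge_symm⟩,
    fun T T' h h' => merge_det h (merge_symm h')⟩
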